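/- arXiv:1207.2874 — 2 statements merged into one kernel-verified Lean document; each statement's English description precedes it below -/
import Mathlib

section
/- Let a and b be linear operators on ℂ² satisfying ab + ba = 1, a² = 0, b² = 0, let φ₀ satisfy aφ₀ = 0 and Ψ₀ satisfy b*Ψ₀ = 0 with the normalization ⟨φ₀, Ψ₀⟩ = 1, and set φ₁ := bφ₀, Ψ₁ := a*Ψ₀. Then the families {φ₀, φ₁} and {Ψ₀, Ψ₁} are biorthonormal: ⟨φₖ, Ψₙ⟩ = δₖₙ for k, n ∈ {0, 1}. -/
open Matrix
open scoped InnerProductSpace ComplexOrder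

noncomputable section

/-- Action of a 2×2 complex matrix (an operator) on a vector of ℂ². -/
def act (A : Matrix (Fin 2) (Fin 2) ℂ) (x : EuclideanSpace ℂ (Fin 2)) :
    EuclideanSpace ℂ (Fin 2) := WithLp.toLp 2 (A.mulVec x)

lemma act_adj (A : Matrix (Fin 2) (Fin 2) ℂ) (x y : EuclideanSpace ℂ (Fin 2)) :
    ⟪act A x, y⟫_ℂ = ⟪x, act Aᴴ y⟫_ℂ := by
  show dotProduct y.ofLp (star (A.mulVec x.ofLp))
      = dotProduct (Aᴴ.mulVec y.ofLp) (star x.ofLp)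
  rw [dotProduct_comm y.ofLp, dotProduct_comm _ (star x.ofLp), Matrix.star_mulVec, Matrix.dotProduct_mulVec]

lemma act_mul (A B : Matrix (Fin 2) (Fin 2) ℂ) (x : EuclideanSpace ℂ (Fin 2)) :
    act (A * B) x = act A (act B x) := by
  simp only [act, WithLp.ofLp_toLp, Matrix.mulVec_mulVec]

/-- With the normalization `⟨φ₀, Ψ₀⟩ = 1`, the families `{φ₀, φ₁}` and
`{Ψ₀, Ψ₁}` are biorthonormal: `⟨φₖ, Ψₙ⟩ = δₖₙ`. -/
theorem stmt3 (a b : Matrix (Fin 2) (Fin 2) ℂ)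
    (hab : a * b + b * a = 1) (ha2 : a * a = 0) (hb2 : b * b = 0)
    (φ₀ Ψ₀ : EuclideanSpace ℂ (Fin 2))
    (hvacφ : act a φ₀ = 0) (hvacΨ : act bᴴ Ψ₀ = 0)
    (hnorm : ⟪φ₀, Ψ₀⟫_ℂ = 1) :
    ⟪φ₀, Ψ₀⟫_ℂ = 1 ∧ ⟪φ₀, act aᴴ Ψ₀⟫_ℂ = 0 ∧
    ⟪act b φ₀, Ψ₀⟫_ℂ = 0 ∧ ⟪act b φ₀, act aᴴ Ψ₀⟫_ℂ = 1 := by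
  refine ⟨hnorm, ?_, ?_, ?_⟩
  · rw [← act_adj, hvacφ, inner_zero_left]
  · rw [act_adj, hvacΨ, inner_zero_right]
  · rw [← act_adj, ← act_mul]
    have : a * b = 1 - b * a := eq_sub_of_add_eq hab
    rw [this]
    have : act (1 - b * a) φ₀ = φ₀ - act b (act a φ₀) := by
      simp only [act, WithLp.ofLp_toLp, Matrix.sub_mulVec, Matrix.mulVec_mulVec, Matrix.one_mulVec, WithLp.toLp_sub, WithLp.toLp_ofLp]
    rw [this, hvacφ, show act b (0 : EuclideanSpace ℂ (Fin 2)) = 0 from by simp [act]]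
    simpa using hnorm
end
end

section
/- Let a and b be linear operators on ℂ² satisfying ab + ba = 1, a² = 0, b² = 0, let φ₀ satisfy aφ₀ = 0 and Ψ₀ satisfy b*Ψ₀ = 0 with ⟨φ₀, Ψ₀⟩ = 1, set φ₁ := bφ₀, Ψ₁ := a*Ψ₀, N := ba, and define S_φ f := ⟨φ₀,f⟩φ₀ + ⟨φ₁,f⟩φ₁ and S_Ψ f := ⟨Ψ₀,f⟩Ψ₀ + ⟨Ψ₁,f⟩Ψ₁. Then the intertwining relations S_Ψ N = N* S_Ψ and S_φ N* = N S_φ hold. -/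
open Matrix
open scoped InnerProductSpace ComplexOrder

noncomputable section

lemma act_ext {A B : Matrix (Fin 2) (Fin 2) ℂ}
    (h : ∀ f : EuclideanSpace ℂ (Fin 2), act A f = act B f) : A = B := by
  ext i j
  have := congrArg (fun v => v.ofLp i) (h (WithLp.toLp 2 (Pi.single j 1)))
  simpa [act, Matrix.mulVec_single] using this

lemma inner_act (A : Matrix (Fin 2) (Fin 2) ℂ) (x y : EuclideanSpace ℂ (Fin 2)) :
    ⟪act Aᴴ x, y⟫_ℂ = ⟪x, act A y⟫_ℂ := by
  have h1 : act Aᴴ x = Matrix.toEuclideanLin Aᴴ x := by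
    simp [act, Matrix.toEuclideanLin_apply]
  have h2 : act A y = Matrix.toEuclideanLin A y := by
    simp [act, Matrix.toEuclideanLin_apply]
  rw [h1, h2, Matrix.toEuclideanLin_conjTranspose_eq_adjoint,
    LinearMap.adjoint_inner_left]

/-- The intertwining relations `S_Ψ N = N* S_Ψ` and `S_φ N* = N S_φ`,
where `N = b a`. -/
theorem stmt8 (a b Sφ SΨ : Matrix (Fin 2) (Fin 2) ℂ)
    (hab : a * b + b * a = 1) (ha2 : a * a = 0) (hb2 : b * b = 0)
    (φ₀ Ψ₀ : EuclideanSpace ℂ (Fin 2))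
    (hvacφ : act a φ₀ = 0) (hvacΨ : act bᴴ Ψ₀ = 0)
    (hnorm : ⟪φ₀, Ψ₀⟫_ℂ = 1)
    (hSφ : ∀ f, act Sφ f = ⟪φ₀, f⟫_ℂ • φ₀ + ⟪act b φ₀, f⟫_ℂ • act b φ₀)
    (hSΨ : ∀ f, act SΨ f = ⟪Ψ₀, f⟫_ℂ • Ψ₀ + ⟪act aᴴ Ψ₀, f⟫_ℂ • act aᴴ Ψ₀) :
    SΨ * (b * a) = (b * a)ᴴ * SΨ ∧ Sφ * (b * a)ᴴ = (b * a) * Sφ := by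
  -- algebraic identities
  have haba : a * b * a = a := by
    have : a * b * a = (a * b + b * a) * a - b * (a * a) := by noncomm_ring
    rw [this, hab, ha2]; simp
  have hbab : b * a * b = b := by
    have : b * a * b = b * (a * b + b * a) - (b * b) * a := by noncomm_ring
    rw [this, hab, hb2]; simp
  -- vacuum facts
  have hNφ0 : act (b * a) φ₀ = 0 := by
    rw [act_mul, hvacφ]; simp [act, Matrix.mulVec_zero]
  have hNφ1 : act (b * a) (act b φ₀) = act b φ₀ := by
    rw [← act_mul, hbab]
  have hNsΨ0 : act (b * a)ᴴ Ψ₀ = 0 := by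
    rw [Matrix.conjTranspose_mul, act_mul, hvacΨ]
    simp [act, Matrix.mulVec_zero]
  have hNsΨ1 : act (b * a)ᴴ (act aᴴ Ψ₀) = act aᴴ Ψ₀ := by
    rw [← act_mul, ← Matrix.conjTranspose_mul, ← mul_assoc, haba]
  -- linearity of act
  have act_lin : ∀ (A : Matrix (Fin 2) (Fin 2) ℂ) (c d : ℂ)
      (x y : EuclideanSpace ℂ (Fin 2)),
      act A (c • x + d • y) = c • act A x + d • act A y := by
    intro A c d x y
    have := map_add (Matrix.toEuclideanLin A) (c • x) (d • y)
    rw [_root_.map_smul, _root_.map_smul] at this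
    simpa [Matrix.toEuclideanLin_apply, act] using this
  constructor
  · apply act_ext
    intro f
    rw [act_mul, hSΨ, act_mul _ SΨ f, hSΨ f, act_lin]
    rw [← inner_act, ← inner_act, hNsΨ0, hNsΨ1]
    simp
  · apply act_ext
    intro f
    rw [act_mul, hSφ, act_mul _ Sφ f, hSφ f, act_lin]
    have h0 : ⟪φ₀, act (b * a)ᴴ f⟫_ℂ = ⟪act (b * a) φ₀, f⟫_ℂ := by
      rw [← inner_act, Matrix.conjTranspose_conjTranspose]
    have h1 : ⟪act b φ₀, act (b * a)ᴴ f⟫_ℂ = ⟪act (b * a) (act b φ₀), f⟫_ℂ := by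
      rw [← inner_act, Matrix.conjTranspose_conjTranspose]
    rw [h0, h1, hNφ0, hNφ1]
    simp
end
end
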